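/- For a 4-bar linkage in 3-dimensional space with positive charges, every critical configuration of the effective Coulomb potential E = t/x + 1/y on the space of spatial configurations is planar. Abstractly: let p1,p2,p3,p4 ∈ ℝ³ be a non-planar configuration with the four edge lengths fixed; then there exists an infinitesimal flex (velocities v1,...,v4 preserving all four edge lengths to first order) that strictly increases both diagonals |p1p3| and |p2p4| to first order; consequently, for any t > 0, E strictly decreases along this flex and the configuration is not critical. -/

import Mathlib

open RealInnerProductSpace

lemma exists_dual_vec (a b c : EuclideanSpace ℝ (Fin 3))
    (h : LinearIndependent ℝ ![a, b, c]) :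
    ∃ w : EuclideanSpace ℝ (Fin 3), ⟪a, w⟫ = 0 ∧ ⟪b, w⟫ = 0 ∧ ⟪c, w⟫ = 1 := by
  have hc : Fintype.card (Fin 3) = Module.finrank ℝ (EuclideanSpace ℝ (Fin 3)) := by
    simp
  let B := basisOfLinearIndependentOfCardEqFinrank h hc
  have hB : ⇑B = ![a, b, c] := coe_basisOfLinearIndependentOfCardEqFinrank h hc
  refine ⟨(InnerProductSpace.toDual ℝ _).symm (B.coord 2).toContinuousLinearMap, ?_, ?_, ?_⟩
  · rw [real_inner_comm, InnerProductSpace.toDual_symm_apply]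
    have : a = B 0 := by rw [hB]; rfl
    simp [this, Module.Basis.coord_apply]
  · rw [real_inner_comm, InnerProductSpace.toDual_symm_apply]
    have : b = B 1 := by rw [hB]; rfl
    simp [this, Module.Basis.coord_apply]
  · rw [real_inner_comm, InnerProductSpace.toDual_symm_apply]
    have : c = B 2 := by rw [hB]; rfl
    simp [this, Module.Basis.coord_apply]

lemma hasDerivAt_norm_line (a w : EuclideanSpace ℝ (Fin 3)) (ha : a ≠ 0) :
    HasDerivAt (fun s : ℝ => ‖a + s • w‖) (⟪a, w⟫ / ‖a‖) 0 := by
  have hf : HasDerivAt (fun s : ℝ => a + s • w) w 0 := by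
    simpa using ((hasDerivAt_id (0:ℝ)).smul_const w).const_add a
  have hq : HasDerivAt (fun s : ℝ => ⟪a + s • w, a + s • w⟫) (2 * ⟪a, w⟫) 0 := by
    have := HasDerivAt.inner ℝ hf hf
    simp only [zero_smul, add_zero] at this
    exact this.congr_deriv (by rw [real_inner_comm w a]; ring)
  have hpos : (0:ℝ) < ⟪a, a⟫ := by
    rw [real_inner_self_eq_norm_mul_norm]
    exact mul_pos (norm_pos_iff.2 ha) (norm_pos_iff.2 ha)
  have hs := hq.sqrt (by simpa using ne_of_gt hpos)
  have heq : (fun s : ℝ => Real.sqrt ⟪a + s • w, a + s • w⟫) = fun s : ℝ => ‖a + s • w‖ := by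
    funext s
    rw [real_inner_self_eq_norm_mul_norm, Real.sqrt_mul_self (norm_nonneg _)]
  rw [heq] at hs
  simp only [zero_smul, add_zero] at hs
  convert hs using 1
  rw [real_inner_self_eq_norm_mul_norm, Real.sqrt_mul_self (norm_nonneg a),
    mul_div_mul_left _ _ (two_ne_zero)]

lemma aff_of_noncoplanar (p : Fin 4 → EuclideanSpace ℝ (Fin 3))
    (hnonplanar : ¬ Coplanar ℝ (Set.range p)) : AffineIndependent ℝ p := by
  by_contra h
  apply hnonplanar
  rw [coplanar_iff_finrank_le_two]
  exact (finrank_vectorSpan_le_iff_not_affineIndependent ℝ p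
    (by simp : Fintype.card (Fin 4) = 2 + 2)).2 h

lemma triple_indep (p : Fin 4 → EuclideanSpace ℝ (Fin 3)) (h : AffineIndependent ℝ p)
    (i0 j k l : Fin 4) (hj : j ≠ i0) (hk : k ≠ i0) (hl : l ≠ i0)
    (hjk : j ≠ k) (hjl : j ≠ l) (hkl : k ≠ l) :
    LinearIndependent ℝ ![p j - p i0, p k - p i0, p l - p i0] := by
  rw [affineIndependent_iff_linearIndependent_vsub ℝ p i0] at h
  let e : Fin 3 → {x : Fin 4 // x ≠ i0} := ![⟨j, hj⟩, ⟨k, hk⟩, ⟨l, hl⟩]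
  have he : Function.Injective e := by
    intro x y hxy
    fin_cases x <;> fin_cases y <;> simp_all [e]
  have := h.comp e he
  have heq : ((fun i : {x : Fin 4 // x ≠ i0} => p ↑i -ᵥ p i0) ∘ e)
      = ![p j - p i0, p k - p i0, p l - p i0] := by
    funext i; fin_cases i <;> simp [e]
  rwa [heq] at this

/-- A non-planar (non-coplanar) spatial configuration of a 4-bar
linkage admits an infinitesimal flex (velocities preserving all four edge
lengths to first order) which strictly increases both diagonals to first
order; consequently, for every charge t > 0 the potential E = t/x + 1/y
strictly decreases along this flex, so the configuration is not critical. -/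
theorem spatial_critical_points_are_planar
    (p : Fin 4 → EuclideanSpace ℝ (Fin 3))
    (hinj : Function.Injective p)
    (hnonplanar : ¬ Coplanar ℝ (Set.range p)) :
    ∃ v : Fin 4 → EuclideanSpace ℝ (Fin 3),
      (∀ i : Fin 4, ⟪p (i+1) - p i, v (i+1) - v i⟫ = 0) ∧
      0 < ⟪p 2 - p 0, v 2 - v 0⟫ ∧
      0 < ⟪p 3 - p 1, v 3 - v 1⟫ ∧
      ∀ t : ℝ, 0 < t →
        deriv (fun s : ℝ =>
          t / dist (p 0 + s • v 0) (p 2 + s • v 2)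
            + 1 / dist (p 1 + s • v 1) (p 3 + s • v 3)) 0 < 0 := by
  have haff := aff_of_noncoplanar p hnonplanar
  obtain ⟨w0, hw0a, hw0b, hw0c⟩ := exists_dual_vec (p 1 - p 0) (p 3 - p 0) (p 2 - p 0)
    (triple_indep p haff 0 1 3 2 (by decide) (by decide) (by decide)
      (by decide) (by decide) (by decide))
  obtain ⟨w3, hw3a, hw3b, hw3c⟩ := exists_dual_vec (p 0 - p 3) (p 2 - p 3) (p 1 - p 3)
    (triple_indep p haff 3 0 2 1 (by decide) (by decide) (by decide)
      (by decide) (by decide) (by decide))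
  have hb0 : ⟪p 0 - p 3, w0⟫ = 0 := by
    rw [show p 0 - p 3 = -(p 3 - p 0) by abel, inner_neg_left, hw0b, neg_zero]
  have hb3 : ⟪p 3 - p 2, w3⟫ = 0 := by
    rw [show p 3 - p 2 = -(p 2 - p 3) by abel, inner_neg_left, hw3b, neg_zero]
  have hb3' : ⟪p 3 - p 1, w3⟫ = -1 := by
    rw [show p 3 - p 1 = -(p 1 - p 3) by abel, inner_neg_left, hw3c]
  refine ⟨![-w0, 0, 0, -w3], ?_, ?_, ?_, ?_⟩
  · intro i
    have E0 : ⟪p 1 - p 0, (0:EuclideanSpace ℝ (Fin 3)) - -w0⟫ = 0 := by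
      rw [zero_sub, neg_neg]; exact hw0a
    have E1 : ⟪p 2 - p 1, (0:EuclideanSpace ℝ (Fin 3)) - 0⟫ = 0 := by
      rw [sub_zero, inner_zero_right]
    have E2 : ⟪p 3 - p 2, -w3 - (0:EuclideanSpace ℝ (Fin 3))⟫ = 0 := by
      rw [sub_zero, inner_neg_right, hb3, neg_zero]
    have E3 : ⟪p 0 - p 3, -w0 - -w3⟫ = 0 := by
      rw [inner_sub_right, inner_neg_right, inner_neg_right, hb0, hw3a]; ring
    fin_cases i
    · exact E0
    · exact E1
    · exact E2
    · exact E3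
  · simp [inner_sub_right, inner_neg_right, hw0c]
  · have : ⟪p 3 - p 1, (![-w0, 0, 0, -w3] : Fin 4 → EuclideanSpace ℝ (Fin 3)) 3
        - (![-w0, 0, 0, -w3] : Fin 4 → EuclideanSpace ℝ (Fin 3)) 1⟫ = 1 := by
      simp [inner_sub_right, inner_neg_right, hb3']
    rw [this]; exact one_pos
  · intro t ht
    have h02 : p 0 - p 2 ≠ 0 := sub_ne_zero.2 fun h => (by decide : (0:Fin 4) ≠ 2) (hinj h)
    have h13 : p 1 - p 3 ≠ 0 := sub_ne_zero.2 fun h => (by decide : (1:Fin 4) ≠ 3) (hinj h)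
    have hip1 : ⟪p 0 - p 2, -w0 - 0⟫ = 1 := by
      rw [sub_zero, show p 0 - p 2 = -(p 2 - p 0) by abel, inner_neg_neg, hw0c]
    have hip2 : ⟪p 1 - p 3, (0:EuclideanSpace ℝ (Fin 3)) - -w3⟫ = 1 := by
      rw [zero_sub, neg_neg]; exact hw3c
    have hrw : (fun s : ℝ =>
        t / dist (p 0 + s • (![-w0, 0, 0, -w3] : Fin 4 → _) 0)
              (p 2 + s • (![-w0, 0, 0, -w3] : Fin 4 → _) 2)
          + 1 / dist (p 1 + s • (![-w0, 0, 0, -w3] : Fin 4 → _) 1)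
              (p 3 + s • (![-w0, 0, 0, -w3] : Fin 4 → _) 3))
        = fun s : ℝ => t / ‖(p 0 - p 2) + s • (-w0 - 0)‖
            + 1 / ‖(p 1 - p 3) + s • ((0:EuclideanSpace ℝ (Fin 3)) - -w3)‖ := by
      funext s
      have e1 : (p 0 + s • (-w0)) - (p 2 + s • (0:EuclideanSpace ℝ (Fin 3)))
          = (p 0 - p 2) + s • (-w0 - 0) := by module
      have e2 : (p 1 + s • (0:EuclideanSpace ℝ (Fin 3))) - (p 3 + s • (-w3))
          = (p 1 - p 3) + s • ((0:EuclideanSpace ℝ (Fin 3)) - -w3) := by module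
      show t / dist (p 0 + s • (-w0)) (p 2 + s • (0:EuclideanSpace ℝ (Fin 3)))
          + 1 / dist (p 1 + s • (0:EuclideanSpace ℝ (Fin 3))) (p 3 + s • (-w3)) = _
      rw [dist_eq_norm, dist_eq_norm, e1, e2]
    rw [hrw]
    have hd1 := hasDerivAt_norm_line (p 0 - p 2) (-w0 - 0) h02
    have hd2 := hasDerivAt_norm_line (p 1 - p 3) ((0:EuclideanSpace ℝ (Fin 3)) - -w3) h13
    have hne1 : ‖(p 0 - p 2) + (0:ℝ) • (-w0 - 0)‖ ≠ 0 := by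
      simp [h02]
    have hne2 : ‖(p 1 - p 3) + (0:ℝ) • ((0:EuclideanSpace ℝ (Fin 3)) - -w3)‖ ≠ 0 := by
      simp [h13]
    have hG := ((hasDerivAt_const (0:ℝ) t).div hd1 hne1).add
      ((hasDerivAt_const (0:ℝ) (1:ℝ)).div hd2 hne2)
    simp only [zero_smul, add_zero] at hG
    have hG' : HasDerivAt (fun s : ℝ => t / ‖(p 0 - p 2) + s • (-w0 - 0)‖
        + 1 / ‖(p 1 - p 3) + s • ((0:EuclideanSpace ℝ (Fin 3)) - -w3)‖) _ 0 := hG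
    rw [hG'.deriv, hip1, hip2]
    have hn1 : (0:ℝ) < ‖p 0 - p 2‖ := norm_pos_iff.2 h02
    have hn2 : (0:ℝ) < ‖p 1 - p 3‖ := norm_pos_iff.2 h13
    have t1 : (0 * ‖p 0 - p 2‖ - t * (1 / ‖p 0 - p 2‖)) / ‖p 0 - p 2‖ ^ 2 < 0 := by
      apply div_neg_of_neg_of_pos
      · have : 0 < t * (1 / ‖p 0 - p 2‖) := mul_pos ht (by positivity)
        linarith
      · positivity
    have t2 : (0 * ‖p 1 - p 3‖ - 1 * (1 / ‖p 1 - p 3‖)) / ‖p 1 - p 3‖ ^ 2 < 0 := by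
      apply div_neg_of_neg_of_pos
      · have : 0 < (1:ℝ) * (1 / ‖p 1 - p 3‖) := by positivity
        linarith
      · positivity
    linarith
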